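/- arXiv:2409.10412 — 4 statements merged into one kernel-verified Lean document; each statement's English description precedes it below -/
import Mathlib

section
/- Let q be a prime power. Let (m_k), (n_k), (r_k) be sequences of positive integers with m_k → ∞, n_k → ∞ and min{m_k, n_k} − r_k → ∞. For each k, let M_k be chosen uniformly at random from the set F_q^{m_k × n_k, r_k} of m_k × n_k matrices of rank r_k over F_q, let X_k be chosen uniformly from F_q^{m_k × r_k} and Y_k uniformly from F_q^{r_k × n_k}, with X_k and Y_k independent. Then the total variation distance sum over all N ∈ F_q^{m_k × n_k} of |P[X_k Y_k = N] − P[M_k = N]| tends to 0 as k → ∞. -/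
open scoped Classical BigOperators
open Filter

set_option linter.unusedSectionVars false

open Matrix Module Submodule Finset

section AuxLemmas
variable {F : Type*} [Field F] [Fintype F]

lemma aux_exists_equiv_map_eq {F V : Type*} [Field F] [AddCommGroup V] [Module F V]
    [FiniteDimensional F V] (W W' : Submodule F V) (h : finrank F W = finrank F W') :
    ∃ e : V ≃ₗ[F] V, W.map (e : V →ₗ[F] V) = W' := by
  obtain ⟨C, hC⟩ := W.exists_isCompl
  obtain ⟨C', hC'⟩ := W'.exists_isCompl
  have hfc : finrank F C = finrank F C' := by
    have h1 := Submodule.finrank_add_eq_of_isCompl hC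
    have h2 := Submodule.finrank_add_eq_of_isCompl hC'
    omega
  let e₀ : W ≃ₗ[F] W' := LinearEquiv.ofFinrankEq _ _ h
  let e₁ : C ≃ₗ[F] C' := LinearEquiv.ofFinrankEq _ _ hfc
  refine ⟨(Submodule.prodEquivOfIsCompl W C hC).symm ≪≫ₗ (LinearEquiv.prodCongr e₀ e₁) ≪≫ₗ
    Submodule.prodEquivOfIsCompl W' C' hC', ?_⟩
  ext x
  simp only [Submodule.mem_map]
  constructor
  · rintro ⟨y, hy, rfl⟩
    have := Submodule.prodEquivOfIsCompl_symm_apply_left W C hC (⟨y, hy⟩ : W)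
    simp only [LinearEquiv.coe_coe, LinearEquiv.trans_apply, this]
    simp
  · intro hx
    refine ⟨((e₀.symm ⟨x, hx⟩ : W) : V), (e₀.symm ⟨x, hx⟩).2, ?_⟩
    have := Submodule.prodEquivOfIsCompl_symm_apply_left W C hC (e₀.symm ⟨x, hx⟩)
    simp only [LinearEquiv.coe_coe, LinearEquiv.trans_apply, this]
    simp

variable {F : Type*} [Field F] [Fintype F]

lemma aux_rank_width_inj {m r : ℕ} {X : Matrix (Fin m) (Fin r) F} (h : X.rank = r) :
    Function.Injective X.mulVecLin := by
  rw [← LinearMap.ker_eq_bot]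
  have h1 := LinearMap.finrank_range_add_finrank_ker X.mulVecLin
  rw [Matrix.rank] at h
  rw [h, Module.finrank_pi] at h1
  simp only [Fintype.card_fin] at h1
  have h0 : finrank F (LinearMap.ker X.mulVecLin) = 0 := by omega
  exact Submodule.finrank_eq_zero.mp h0

lemma aux_rank_mul_of_surj {m n r : ℕ} (X : Matrix (Fin m) (Fin r) F)
    (Y : Matrix (Fin r) (Fin n) F) (hY : LinearMap.range Y.mulVecLin = ⊤) :
    (X * Y).rank = X.rank := by
  rw [Matrix.rank, Matrix.rank, Matrix.mulVecLin_mul, LinearMap.range_comp, hY,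
    Submodule.map_top]

lemma aux_range_eq_top_of_rank {n r : ℕ} {Y : Matrix (Fin r) (Fin n) F} (h : Y.rank = r) :
    LinearMap.range Y.mulVecLin = ⊤ := by
  apply Submodule.eq_top_of_finrank_eq
  rw [← Matrix.rank, h, Module.finrank_pi]
  simp

lemma aux_rank_mul_full {m n r : ℕ} {X : Matrix (Fin m) (Fin r) F}
    {Y : Matrix (Fin r) (Fin n) F} (hX : X.rank = r) (hY : Y.rank = r) :
    (X * Y).rank = r := by
  rw [aux_rank_mul_of_surj X Y (aux_range_eq_top_of_rank hY), hX]

open scoped Classical in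
lemma aux_card_pairs {m n r : ℕ} (N : Matrix (Fin m) (Fin n) F) (hN : N.rank = r) :
    (Finset.univ.filter
      (fun P : Matrix (Fin m) (Fin r) F × Matrix (Fin r) (Fin n) F =>
        P.1 * P.2 = N)).card =
    (Finset.univ.filter (fun X : Matrix (Fin m) (Fin r) F =>
      LinearMap.range X.mulVecLin = LinearMap.range N.mulVecLin)).card := by
  -- key fact : if X * Y = N then range X = range N and X injective
  have key : ∀ (X : Matrix (Fin m) (Fin r) F) (Y : Matrix (Fin r) (Fin n) F),
      X * Y = N → LinearMap.range X.mulVecLin = LinearMap.range N.mulVecLin := by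
    intro X Y hXY
    have hle : LinearMap.range N.mulVecLin ≤ LinearMap.range X.mulVecLin := by
      rw [← hXY, Matrix.mulVecLin_mul]
      exact LinearMap.range_comp_le_range _ _
    refine (Submodule.eq_of_le_of_finrank_le hle ?_).symm
    have h1 : finrank F (LinearMap.range X.mulVecLin) ≤ r := by
      have := X.rank_le_card_width
      rwa [Matrix.rank, Fintype.card_fin] at this
    have h2 : finrank F (LinearMap.range N.mulVecLin) = r := hN
    rw [h2]
    exact h1
  refine Finset.card_bij (fun P _ => P.1) ?_ ?_ ?_
  · rintro ⟨X, Y⟩ hP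
    simp only [Finset.mem_filter, Finset.mem_univ, true_and] at hP ⊢
    exact key X Y hP
  · rintro ⟨X, Y⟩ hP ⟨X', Y'⟩ hP' (h : X = X')
    simp only [Finset.mem_filter, Finset.mem_univ, true_and] at hP hP'
    subst h
    have hX : X.rank = r := by
      rw [Matrix.rank, key X Y hP, ← Matrix.rank, hN]
    have hinj := aux_rank_width_inj hX
    have hcol : ∀ j, Y *ᵥ Pi.single j 1 = Y' *ᵥ Pi.single j 1 := by
      intro j
      apply hinj
      show X *ᵥ (Y *ᵥ _) = X *ᵥ (Y' *ᵥ _)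
      rw [Matrix.mulVec_mulVec, Matrix.mulVec_mulVec, hP, hP']
    refine Prod.ext rfl ?_
    ext k j
    have := congrFun (hcol j) k
    simpa using this
  · intro X hX
    simp only [Finset.mem_filter, Finset.mem_univ, true_and] at hX
    have hcol : ∀ j : Fin n, (N *ᵥ Pi.single j 1) ∈ LinearMap.range X.mulVecLin := by
      intro j
      rw [hX]
      exact LinearMap.mem_range_self _ _
    choose y hy using hcol
    refine ⟨(X, Matrix.of fun k j => y j k), ?_, rfl⟩
    simp only [Finset.mem_filter, Finset.mem_univ, true_and]
    ext i j
    have := congrFun (hy j) i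
    simp only [Matrix.mulVecLin_apply] at this
    simp only [Matrix.mul_apply, Matrix.of_apply]
    rw [show ∑ k, X i k * y j k = (X *ᵥ y j) i from rfl, this]
    simp [Matrix.mulVec_single]

open scoped Classical in
lemma aux_card_range_eq {m r : ℕ} (W W' : Submodule F (Fin m → F))
    (h : finrank F W = finrank F W') :
    (Finset.univ.filter (fun X : Matrix (Fin m) (Fin r) F =>
      LinearMap.range X.mulVecLin = W)).card =
    (Finset.univ.filter (fun X : Matrix (Fin m) (Fin r) F =>
      LinearMap.range X.mulVecLin = W')).card := by
  obtain ⟨e, he⟩ := aux_exists_equiv_map_eq W W' h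
  set A : Matrix (Fin m) (Fin m) F := LinearMap.toMatrix' (e : (Fin m → F) →ₗ[F] Fin m → F)
  set B : Matrix (Fin m) (Fin m) F := LinearMap.toMatrix' (e.symm : (Fin m → F) →ₗ[F] Fin m → F)
  have hA : A.mulVecLin = (e : (Fin m → F) →ₗ[F] Fin m → F) := by
    rw [← Matrix.toLin'_apply', Matrix.toLin'_toMatrix']
  have hB : B.mulVecLin = (e.symm : (Fin m → F) →ₗ[F] Fin m → F) := by
    rw [← Matrix.toLin'_apply', Matrix.toLin'_toMatrix']
  have hBA : B * A = 1 := by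
    rw [show B * A = LinearMap.toMatrix'
      ((e.symm : (Fin m → F) →ₗ[F] Fin m → F) ∘ₗ (e : (Fin m → F) →ₗ[F] Fin m → F))
      from (LinearMap.toMatrix'_comp _ _).symm]
    rw [show ((e.symm : (Fin m → F) →ₗ[F] Fin m → F) ∘ₗ (e : (Fin m → F) →ₗ[F] Fin m → F))
      = LinearMap.id by ext x; simp]
    exact LinearMap.toMatrix'_id
  have hAB : A * B = 1 := by
    rw [show A * B = LinearMap.toMatrix'
      ((e : (Fin m → F) →ₗ[F] Fin m → F) ∘ₗ (e.symm : (Fin m → F) →ₗ[F] Fin m → F))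
      from (LinearMap.toMatrix'_comp _ _).symm]
    rw [show ((e : (Fin m → F) →ₗ[F] Fin m → F) ∘ₗ (e.symm : (Fin m → F) →ₗ[F] Fin m → F))
      = LinearMap.id by ext x; simp]
    exact LinearMap.toMatrix'_id
  refine Finset.card_bij (fun X _ => A * X) ?_ ?_ ?_
  · intro X hX
    simp only [Finset.mem_filter, Finset.mem_univ, true_and] at hX ⊢
    rw [Matrix.mulVecLin_mul, LinearMap.range_comp, hX, hA, he]
  · intro X hX X' hX' hXX
    have := congrArg (fun M => B * M) hXX
    simpa [← Matrix.mul_assoc, hBA] using this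
  · intro X' hX'
    simp only [Finset.mem_filter, Finset.mem_univ, true_and] at hX'
    refine ⟨B * X', ?_, by show A * (B * X') = X'; rw [← Matrix.mul_assoc, hAB, Matrix.one_mul]⟩
    simp only [Finset.mem_filter, Finset.mem_univ, true_and]
    rw [Matrix.mulVecLin_mul, LinearMap.range_comp, hX', hB]
    rw [← he, ← Submodule.map_comp]
    rw [show ((e.symm : (Fin m → F) →ₗ[F] Fin m → F) ∘ₗ (e : (Fin m → F) →ₗ[F] Fin m → F))
      = LinearMap.id by ext x; simp]
    exact Submodule.map_id W

open scoped Classical in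
lemma aux_card_pairs_const {m n r : ℕ} (N N' : Matrix (Fin m) (Fin n) F)
    (hN : N.rank = r) (hN' : N'.rank = r) :
    (Finset.univ.filter
      (fun P : Matrix (Fin m) (Fin r) F × Matrix (Fin r) (Fin n) F =>
        P.1 * P.2 = N)).card =
    (Finset.univ.filter
      (fun P : Matrix (Fin m) (Fin r) F × Matrix (Fin r) (Fin n) F =>
        P.1 * P.2 = N')).card := by
  rw [aux_card_pairs N hN, aux_card_pairs N' hN']
  exact aux_card_range_eq _ _ (by rw [← Matrix.rank, ← Matrix.rank, hN, hN'])

open scoped Classical in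
lemma aux_card_mulVec_zero {m r : ℕ} (v : Fin r → F) (hv : v ≠ 0) :
    (Finset.univ.filter (fun X : Matrix (Fin m) (Fin r) F => X *ᵥ v = 0)).card =
      Fintype.card F ^ (m * (r - 1)) := by
  -- the linear map X ↦ X *ᵥ v
  let φ : Matrix (Fin m) (Fin r) F →ₗ[F] (Fin m → F) :=
    { toFun := fun X => X *ᵥ v
      map_add' := fun X Y => Matrix.add_mulVec X Y v
      map_smul' := fun c X => by simp [Matrix.smul_mulVec] }
  have hsurj : Function.Surjective φ := by
    obtain ⟨j, hj⟩ : ∃ j, v j ≠ 0 := by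
      by_contra hc
      push_neg at hc
      exact hv (funext fun j => hc j)
    intro w
    refine ⟨Matrix.of fun i k => if k = j then w i / v j else 0, ?_⟩
    funext i
    show (_ *ᵥ v) i = w i
    simp only [Matrix.mulVec, dotProduct, Matrix.of_apply]
    rw [Finset.sum_eq_single j]
    · rw [if_pos rfl]
      field_simp
    · intro b _ hb; simp [hb]
    · simp
  have hker : (Finset.univ.filter (fun X : Matrix (Fin m) (Fin r) F => X *ᵥ v = 0)).card
      = Fintype.card (LinearMap.ker φ) := by
    rw [Fintype.card_subtype]
    congr 1
    ext X
    simp only [Finset.mem_filter, Finset.mem_univ, true_and, LinearMap.mem_ker]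
    rfl
  rw [hker]
  have hcard : Fintype.card (LinearMap.ker φ)
      = Fintype.card F ^ finrank F (LinearMap.ker φ) := card_eq_pow_finrank
  rw [hcard]
  congr 1
  have h1 := LinearMap.finrank_range_add_finrank_ker φ
  rw [LinearMap.range_eq_top.mpr hsurj, finrank_top] at h1
  have h2 : finrank F (Matrix (Fin m) (Fin r) F) = m * r := by
    rw [Module.finrank_matrix]; simp
  have h3 : finrank F (Fin m → F) = m := by rw [Module.finrank_pi]; simp
  rw [h2, h3] at h1
  -- h1 : m + finrank ker = m * r
  have : m * r = m * (r - 1) + m ∨ r = 0 := by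
    rcases Nat.eq_zero_or_pos r with h | h
    · right; exact h
    · left; cases r with
      | zero => omega
      | succ t => simp [Nat.mul_succ]
  rcases this with h | h
  · omega
  · subst h
    exfalso
    exact hv (funext fun j => absurd j.2 (by omega))

open scoped Classical in
lemma aux_card_bad_rank {m r : ℕ} :
    (Finset.univ.filter (fun X : Matrix (Fin m) (Fin r) F => X.rank ≠ r)).card ≤
      (Fintype.card F ^ r - 1) * Fintype.card F ^ (m * (r - 1)) := by
  have hsub : (Finset.univ.filter (fun X : Matrix (Fin m) (Fin r) F => X.rank ≠ r)) ⊆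
      (Finset.univ.erase (0 : Fin r → F)).biUnion
        (fun v => Finset.univ.filter (fun X : Matrix (Fin m) (Fin r) F => X *ᵥ v = 0)) := by
    intro X hX
    simp only [Finset.mem_filter, Finset.mem_univ, true_and] at hX
    have hker : LinearMap.ker X.mulVecLin ≠ ⊥ := by
      intro hbot
      apply hX
      have h1 := LinearMap.finrank_range_add_finrank_ker X.mulVecLin
      rw [hbot, finrank_bot, Module.finrank_pi] at h1
      simp only [Fintype.card_fin, add_zero] at h1
      rw [Matrix.rank, h1]
    obtain ⟨v, hv, hv0⟩ := Submodule.exists_mem_ne_zero_of_ne_bot hker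
    rw [Finset.mem_biUnion]
    exact ⟨v, Finset.mem_erase.mpr ⟨hv0, Finset.mem_univ v⟩,
      Finset.mem_filter.mpr ⟨Finset.mem_univ X, hv⟩⟩
  calc _ ≤ _ := Finset.card_le_card hsub
    _ ≤ ∑ v ∈ Finset.univ.erase (0 : Fin r → F),
        (Finset.univ.filter (fun X : Matrix (Fin m) (Fin r) F => X *ᵥ v = 0)).card :=
      Finset.card_biUnion_le
    _ = ∑ v ∈ Finset.univ.erase (0 : Fin r → F), Fintype.card F ^ (m * (r - 1)) := by
      apply Finset.sum_congr rfl
      intro v hv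
      exact aux_card_mulVec_zero v (Finset.mem_erase.mp hv).1
    _ = (Fintype.card F ^ r - 1) * Fintype.card F ^ (m * (r - 1)) := by
      rw [Finset.sum_const, smul_eq_mul]
      congr 1
      rw [Finset.card_erase_of_mem (Finset.mem_univ _), Finset.card_univ]
      simp [Fintype.card_pi]

open scoped Classical in
lemma aux_rankSet_nonempty {m n r : ℕ} (hrm : r ≤ m) (hrn : r ≤ n) :
    ∃ N : Matrix (Fin m) (Fin n) F, N.rank = r := by
  let X₀ : Matrix (Fin m) (Fin r) F := Matrix.of fun i j => if (i : ℕ) = (j : ℕ) then 1 else 0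
  let Y₀ : Matrix (Fin r) (Fin n) F := Matrix.of fun j i => if (j : ℕ) = (i : ℕ) then 1 else 0
  have hX : X₀.rank = r := by
    have hinj : Function.Injective X₀.mulVecLin := by
      intro w w' hww
      funext j
      have := congrFun hww (Fin.castLE hrm j)
      simp only [Matrix.mulVecLin_apply, Matrix.mulVec, dotProduct, Matrix.of_apply, X₀] at this
      rw [Finset.sum_eq_single j, Finset.sum_eq_single j] at this
      · simpa using this
      · intro b _ hb
        have hjb : (j : ℕ) ≠ (b : ℕ) := fun hc => hb (Fin.ext hc).symm
        simp [hjb]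
      · simp
      · intro b _ hb
        have hjb : (j : ℕ) ≠ (b : ℕ) := fun hc => hb (Fin.ext hc).symm
        simp [hjb]
      · simp
    rw [Matrix.rank, LinearMap.finrank_range_of_inj hinj, Module.finrank_pi]
    simp
  have hY : LinearMap.range Y₀.mulVecLin = ⊤ := by
    rw [LinearMap.range_eq_top]
    intro u
    refine ⟨fun i => if h : (i : ℕ) < r then u ⟨i, h⟩ else 0, ?_⟩
    funext j
    simp only [Matrix.mulVecLin_apply, Matrix.mulVec, dotProduct, Matrix.of_apply, Y₀]
    rw [Finset.sum_eq_single (Fin.castLE hrn j)]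
    · simp [j.2]
    · intro b _ hb
      have : ((j : Fin r) : ℕ) ≠ (b : ℕ) := by
        intro hc
        exact hb (Fin.ext (by simpa using hc.symm))
      simp [this]
    · simp
  exact ⟨X₀ * Y₀, by rw [aux_rank_mul_of_surj X₀ Y₀ hY, hX]⟩

lemma aux_nat_ineq {q m r : ℕ} (hq : 2 ≤ q) (hr0 : 0 < r) (hrm : r ≤ m) :
    (q ^ r - 1) * q ^ (m * (r - 1)) * 2 ^ (m - r) ≤ q ^ (m * r) := by
  calc (q ^ r - 1) * q ^ (m * (r - 1)) * 2 ^ (m - r)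
      ≤ q ^ r * q ^ (m * (r - 1)) * q ^ (m - r) :=
        Nat.mul_le_mul (Nat.mul_le_mul (Nat.sub_le _ _) le_rfl)
          (Nat.pow_le_pow_left hq _)
    _ = q ^ (r + m * (r - 1) + (m - r)) := by rw [pow_add, pow_add]
    _ = q ^ (m * r) := by
        congr 1
        have h1 : m * r = m * (r - 1) + m := by
          cases r with
          | zero => omega
          | succ t => simp [Nat.mul_succ]
        omega

end AuxLemmas

noncomputable section

/-- The set of `m × n` matrices of rank `r` over `F`. -/
def rankSet (F : Type*) [Field F] [Fintype F] (m n r : ℕ) :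
    Finset (Matrix (Fin m) (Fin n) F) :=
  Finset.univ.filter (fun M => M.rank = r)

/-- `P[M = N]` where `M` is uniform on the `m × n` matrices of rank `r`. -/
def probRankEq (F : Type*) [Field F] [Fintype F] (m n r : ℕ)
    (N : Matrix (Fin m) (Fin n) F) : ℝ :=
  (((rankSet F m n r).filter (fun M => M = N)).card : ℝ) /
    ((rankSet F m n r).card : ℝ)

/-- `P[XY = N]` where `X` is uniform on `m × r` matrices, `Y` is uniform on `r × n`
matrices, and `X, Y` are independent. -/
def probProdEq (F : Type*) [Field F] [Fintype F] (m n r : ℕ)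
    (N : Matrix (Fin m) (Fin n) F) : ℝ :=
  ((Finset.univ.filter
      (fun P : Matrix (Fin m) (Fin r) F × Matrix (Fin r) (Fin n) F =>
        P.1 * P.2 = N)).card : ℝ) /
    (Fintype.card (Matrix (Fin m) (Fin r) F × Matrix (Fin r) (Fin n) F) : ℝ)

section AuxLemmas2
variable {F : Type*} [Field F] [Fintype F]

set_option maxHeartbeats 2000000 in
lemma aux_tv_le {m n r : ℕ} (hr0 : 0 < r) (hrm : r ≤ m) (hrn : r ≤ n) :
    ∑ N : Matrix (Fin m) (Fin n) F,
        |probProdEq F m n r N - probRankEq F m n r N| ≤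
      4 * (1/2 : ℝ) ^ (min m n - r) := by
  classical
  set q := Fintype.card F with hqdef
  have hq2 : 2 ≤ q := Fintype.one_lt_card
  set A := Fintype.card (Matrix (Fin m) (Fin r) F) with hAdef
  set B := Fintype.card (Matrix (Fin r) (Fin n) F) with hBdef
  have hAq : A = q ^ (m * r) := by
    rw [hAdef, card_eq_pow_finrank (K := F), Module.finrank_matrix]
    simp [mul_comm, hqdef]
  have hBq : B = q ^ (n * r) := by
    rw [hBdef, card_eq_pow_finrank (K := F), Module.finrank_matrix]
    simp [mul_comm, hqdef]
  have hA0 : 0 < A := Fintype.card_pos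
  have hB0 : 0 < B := Fintype.card_pos
  have hA0R : (0:ℝ) < A := by exact_mod_cast hA0
  have hB0R : (0:ℝ) < B := by exact_mod_cast hB0
  set pairs : Matrix (Fin m) (Fin n) F →
      Finset (Matrix (Fin m) (Fin r) F × Matrix (Fin r) (Fin n) F) := fun N =>
    Finset.univ.filter (fun P => P.1 * P.2 = N) with hpairs
  set R := rankSet F m n r with hRdef
  obtain ⟨N₀, hN₀⟩ := aux_rankSet_nonempty (F := F) hrm hrn
  have hN₀R : N₀ ∈ R := by simp [hRdef, rankSet, hN₀]
  have hρ0 : 0 < R.card := Finset.card_pos.mpr ⟨N₀, hN₀R⟩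
  have hρ0R : (0:ℝ) < R.card := by exact_mod_cast hρ0
  set c := (pairs N₀).card with hcdef
  have hcc : ∀ N ∈ R, (pairs N).card = c := by
    intro N hN
    have hNr : N.rank = r := by
      simpa [hRdef, rankSet] using hN
    exact aux_card_pairs_const N N₀ hNr hN₀
  -- total count
  have hQ : ∑ N : Matrix (Fin m) (Fin n) F, (pairs N).card = A * B := by
    rw [← Fintype.card_prod, ← Finset.card_univ]
    exact (Finset.card_eq_sum_card_fiberwise
      (f := fun P : Matrix (Fin m) (Fin r) F × Matrix (Fin r) (Fin n) F => P.1 * P.2)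
      (t := Finset.univ) (fun P _ => Finset.mem_univ _)).symm ▸ rfl
  have hRsum : ∑ N ∈ R, (pairs N).card = R.card * c := by
    rw [Finset.sum_congr rfl hcc, Finset.sum_const, smul_eq_mul]
  have hle : R.card * c ≤ A * B := by
    rw [← hRsum, ← hQ]
    exact Finset.sum_le_sum_of_subset (Finset.subset_univ R)
  -- value of probRankEq
  have hprob1 : ∀ N ∈ R, probRankEq F m n r N = 1 / (R.card : ℝ) := by
    intro N hN
    unfold probRankEq
    rw [Finset.filter_eq' (rankSet F m n r) N, if_pos (hRdef ▸ hN)]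
    simp [hRdef]
  have hprob0 : ∀ N ∉ R, probRankEq F m n r N = 0 := by
    intro N hN
    unfold probRankEq
    rw [Finset.filter_eq' (rankSet F m n r) N, if_neg (fun hc => hN (hRdef ▸ hc))]
    simp
  have hprod : ∀ N, probProdEq F m n r N = ((pairs N).card : ℝ) / ((A : ℝ) * B) := by
    intro N
    unfold probProdEq
    rw [Fintype.card_prod]
    push_cast
    rfl
  set g : ℝ := (R.card : ℝ) * c / ((A:ℝ) * B) with hgdef
  have hg1 : g ≤ 1 := by
    rw [hgdef, div_le_one (by positivity)]
    exact_mod_cast hle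
  -- split the sum
  have hsplit : ∑ N : Matrix (Fin m) (Fin n) F,
      |probProdEq F m n r N - probRankEq F m n r N|
      = ∑ N ∈ R, |probProdEq F m n r N - probRankEq F m n r N|
        + ∑ N ∈ Finset.univ.filter (fun N : Matrix (Fin m) (Fin n) F => ¬ N.rank = r),
          |probProdEq F m n r N - probRankEq F m n r N| := by
    rw [← Finset.sum_filter_add_sum_filter_not Finset.univ
      (fun N : Matrix (Fin m) (Fin n) F => N.rank = r)]
    rfl
  have hS1 : ∑ N ∈ R, |probProdEq F m n r N - probRankEq F m n r N| = 1 - g := by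
    have : ∀ N ∈ R, |probProdEq F m n r N - probRankEq F m n r N|
        = |(c : ℝ) / ((A:ℝ) * B) - 1 / (R.card : ℝ)| := by
      intro N hN
      rw [hprod, hprob1 N hN, hcc N hN]
    rw [Finset.sum_congr rfl this, Finset.sum_const, nsmul_eq_mul]
    have hkey : (c:ℝ)/((A:ℝ)*B) ≤ 1/(R.card:ℝ) := by
      rw [div_le_div_iff₀ (by positivity) hρ0R, one_mul]
      calc (c:ℝ) * R.card = (R.card:ℝ) * c := by ring
        _ ≤ (A:ℝ)*B := by exact_mod_cast hle
    rw [abs_of_nonpos (by linarith), hgdef]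
    field_simp
    ring
  have hS2 : ∑ N ∈ Finset.univ.filter (fun N : Matrix (Fin m) (Fin n) F => ¬ N.rank = r),
      |probProdEq F m n r N - probRankEq F m n r N| = 1 - g := by
    have hRc : Finset.univ.filter (fun N : Matrix (Fin m) (Fin n) F => ¬ N.rank = r)
        = Finset.univ \ R := by
      ext N
      simp [hRdef, rankSet]
    have h1 : ∀ N ∈ Finset.univ \ R, |probProdEq F m n r N - probRankEq F m n r N|
        = ((pairs N).card : ℝ) / ((A:ℝ) * B) := by
      intro N hN
      rw [hprob0 N (Finset.mem_sdiff.mp hN).2, sub_zero, hprod, abs_of_nonneg (by positivity)]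
    rw [hRc, Finset.sum_congr rfl h1, ← Finset.sum_div]
    have h2 : ∑ N ∈ Finset.univ \ R, ((pairs N).card : ℝ)
        = (A:ℝ) * B - (R.card : ℝ) * c := by
      have h3 := Finset.sum_sdiff_eq_sub (f := fun N => ((pairs N).card : ℝ))
        (Finset.subset_univ R)
      rw [h3]
      congr 1
      · rw [← Nat.cast_sum]
        exact_mod_cast congrArg (Nat.cast (R := ℝ)) hQ
      · rw [← Nat.cast_sum]
        exact_mod_cast congrArg (Nat.cast (R := ℝ)) hRsum
    rw [h2, hgdef]
    field_simp
  set a := (Finset.univ.filter (fun X : Matrix (Fin m) (Fin r) F => X.rank = r)).card with hadef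
  set b := (Finset.univ.filter (fun Y : Matrix (Fin r) (Fin n) F => Y.rank = r)).card with hbdef
  have hab : a * b ≤ R.card * c := by
    rw [← hRsum, ← Finset.card_product]
    have hsub : ((Finset.univ.filter (fun X : Matrix (Fin m) (Fin r) F => X.rank = r)) ×ˢ
        (Finset.univ.filter (fun Y : Matrix (Fin r) (Fin n) F => Y.rank = r))) ⊆
        Finset.univ.filter (fun P : Matrix (Fin m) (Fin r) F × Matrix (Fin r) (Fin n) F =>
          (P.1 * P.2).rank = r) := by
      rintro ⟨X, Y⟩ hp
      rw [Finset.mem_product] at hp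
      simp only [Finset.mem_filter, Finset.mem_univ, true_and] at hp ⊢
      exact aux_rank_mul_full hp.1 hp.2
    refine le_trans (Finset.card_le_card hsub) ?_
    rw [Finset.card_eq_sum_card_fiberwise
      (f := fun P : Matrix (Fin m) (Fin r) F × Matrix (Fin r) (Fin n) F => P.1 * P.2)
      (t := R) (fun P hP => by
        simp only [Finset.coe_filter, Set.mem_setOf_eq, Finset.mem_coe, Finset.mem_filter, Finset.mem_univ, true_and] at hP
        simp [hRdef, rankSet, hP])]
    apply le_of_eq
    apply Finset.sum_congr rfl
    intro N hN
    have hNr : N.rank = r := by simpa [hRdef, rankSet] using hN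
    congr 1
    ext P
    simp only [hpairs, Finset.mem_filter, Finset.mem_univ, true_and]
    constructor
    · rintro ⟨_, h⟩; exact h
    · rintro rfl; exact ⟨hNr, rfl⟩
  have haA : a ≤ A := by rw [hAdef]; exact le_trans (Finset.card_filter_le _ _) (by simp)
  have hbB : b ≤ B := by rw [hBdef]; exact le_trans (Finset.card_filter_le _ _) (by simp)
  have hbound : ∀ (m' : ℕ) (a' A' : ℕ), r ≤ m' → a' ≤ A' → A' = q ^ (m' * r) →
      (A' - a') * 2 ^ (m' - r) ≤ A' →
      1 - (a' : ℝ) / A' ≤ (1/2 : ℝ) ^ (m' - r) := by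
    intro m' a' A' hrm' ha'A' hA'q hnat
    have hA'0 : (0:ℝ) < A' := by
      have : 0 < A' := by rw [hA'q]; positivity
      exact_mod_cast this
    rw [show (1 - (a':ℝ)/A') = ((A' - a' : ℕ):ℝ)/A' by
      rw [Nat.cast_sub ha'A']; field_simp]
    rw [div_pow, one_pow, div_le_div_iff₀ hA'0 (by positivity), one_mul]
    exact_mod_cast hnat
  have hnatm : (A - a) * 2 ^ (m - r) ≤ A := by
    have hbad := aux_card_bad_rank (F := F) (m := m) (r := r)
    have hsum := Finset.card_filter_add_card_filter_not
      (s := Finset.univ) (p := fun X : Matrix (Fin m) (Fin r) F => X.rank = r)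
    rw [Finset.card_univ] at hsum
    calc (A - a) * 2 ^ (m - r)
        ≤ ((q ^ r - 1) * q ^ (m * (r - 1))) * 2 ^ (m - r) := by
          apply Nat.mul_le_mul_right
          have : A - a = (Finset.univ.filter
            (fun X : Matrix (Fin m) (Fin r) F => ¬ X.rank = r)).card := by omega
          rw [this]
          exact hbad
      _ ≤ q ^ (m * r) := aux_nat_ineq hq2 hr0 hrm
      _ = A := hAq.symm
  have hnatn : (B - b) * 2 ^ (n - r) ≤ B := by
    have hbad := aux_card_bad_rank (F := F) (m := n) (r := r)
    have hsum := Finset.card_filter_add_card_filter_not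
      (s := Finset.univ) (p := fun Y : Matrix (Fin n) (Fin r) F => Y.rank = r)
    rw [Finset.card_univ] at hsum
    have hBcard : B = Fintype.card (Matrix (Fin n) (Fin r) F) := by
      rw [hBq, card_eq_pow_finrank (K := F) (V := Matrix (Fin n) (Fin r) F),
        Module.finrank_matrix]
      simp [hqdef]
    have hbcard : b = (Finset.univ.filter
        (fun Y : Matrix (Fin n) (Fin r) F => Y.rank = r)).card := by
      rw [hbdef]
      apply Finset.card_bij (fun Y _ => Yᵀ)
      · intro Y hY
        simp only [Finset.mem_filter, Finset.mem_univ, true_and] at hY ⊢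
        rw [Matrix.rank_transpose]
        exact hY
      · intro Y _ Y' _ h
        have := congrArg Matrix.transpose h
        simpa using this
      · intro Y hY
        refine ⟨Yᵀ, ?_, by simp⟩
        simp only [Finset.mem_filter, Finset.mem_univ, true_and] at hY ⊢
        rw [Matrix.rank_transpose]
        exact hY
    calc (B - b) * 2 ^ (n - r)
        ≤ ((q ^ r - 1) * q ^ (n * (r - 1))) * 2 ^ (n - r) := by
          apply Nat.mul_le_mul_right
          have h1 : B - b = (Finset.univ.filter
            (fun Y : Matrix (Fin n) (Fin r) F => ¬ Y.rank = r)).card := by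
            rw [hBcard, hbcard]; omega
          rw [h1]
          exact hbad
      _ ≤ q ^ (n * r) := aux_nat_ineq hq2 hr0 hrn
      _ = B := hBq.symm
  have hαm : 1 - (a : ℝ) / A ≤ (1/2 : ℝ) ^ (m - r) := hbound m a A hrm haA hAq hnatm
  have hαn : 1 - (b : ℝ) / B ≤ (1/2 : ℝ) ^ (n - r) := hbound n b B hrn hbB hBq hnatn
  have hgab : (a : ℝ)/A * ((b : ℝ)/B) ≤ g := by
    rw [hgdef, div_mul_div_comm]
    apply div_le_div_of_nonneg_right ?_ (by positivity)
    exact_mod_cast hab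
  have hα1 : (a : ℝ)/A ≤ 1 := by
    rw [div_le_one hA0R]; exact_mod_cast haA
  have hβ1 : (b : ℝ)/B ≤ 1 := by
    rw [div_le_one hB0R]; exact_mod_cast hbB
  have hα0 : (0:ℝ) ≤ (a : ℝ)/A := div_nonneg (Nat.cast_nonneg a) (le_of_lt hA0R)
  have hβ0 : (0:ℝ) ≤ (b : ℝ)/B := div_nonneg (Nat.cast_nonneg b) (le_of_lt hB0R)
  have hmin1 : (1/2 : ℝ) ^ (m - r) ≤ (1/2 : ℝ) ^ (min m n - r) :=
    pow_le_pow_of_le_one (by norm_num) (by norm_num)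
      (Nat.sub_le_sub_right (min_le_left m n) r)
  have hmin2 : (1/2 : ℝ) ^ (n - r) ≤ (1/2 : ℝ) ^ (min m n - r) :=
    pow_le_pow_of_le_one (by norm_num) (by norm_num)
      (Nat.sub_le_sub_right (min_le_right m n) r)
  calc ∑ N : Matrix (Fin m) (Fin n) F,
      |probProdEq F m n r N - probRankEq F m n r N| = (1 - g) + (1 - g) := by
        rw [hsplit, hS1, hS2]
    _ ≤ 2 * ((1 - (a:ℝ)/A) + (1 - (b:ℝ)/B)) := by nlinarith
    _ ≤ 2 * ((1/2 : ℝ) ^ (m - r) + (1/2 : ℝ) ^ (n - r)) := by linarith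
    _ ≤ 4 * (1/2 : ℝ) ^ (min m n - r) := by linarith
end AuxLemmas2

/-- Lemma 2.1: the total variation distance between the law of `XY` and the uniform law on
rank-`r` matrices tends to `0` as `m, n → ∞` with `min{m,n} - r → ∞`. -/
theorem totalVariation_prod_rank_tendsto_zero
    {F : Type*} [Field F] [Fintype F]
    (m n r : ℕ → ℕ)
    (hm0 : ∀ k, 0 < m k) (hn0 : ∀ k, 0 < n k) (hr0 : ∀ k, 0 < r k)
    (hm : Tendsto m atTop atTop) (hn : Tendsto n atTop atTop)
    (hmnr : Tendsto (fun k => (min (m k) (n k) : ℤ) - (r k : ℤ)) atTop atTop) :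
    Tendsto (fun k => ∑ N : Matrix (Fin (m k)) (Fin (n k)) F,
        |probProdEq F (m k) (n k) (r k) N - probRankEq F (m k) (n k) (r k) N|)
      atTop (nhds 0) := by
  have hdT : Tendsto (fun k => min (m k) (n k) - r k) atTop atTop := by
    rw [tendsto_atTop]
    intro C
    filter_upwards [tendsto_atTop.1 hmnr (C : ℤ)] with k hk
    rw [← Nat.cast_min] at hk
    omega
  apply squeeze_zero' (g := fun k => 4 * (1/2 : ℝ) ^ (min (m k) (n k) - r k))
  · filter_upwards with k
    exact Finset.sum_nonneg fun N _ => abs_nonneg _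
  · filter_upwards [tendsto_atTop.1 hmnr 0] with k hk
    rw [← Nat.cast_min] at hk
    have hrm : r k ≤ m k := by
      have := min_le_left (m k) (n k); omega
    have hrn : r k ≤ n k := by
      have := min_le_right (m k) (n k); omega
    exact aux_tv_le (hr0 k) hrm hrn
  · have h1 : Tendsto (fun d : ℕ => (1/2 : ℝ) ^ d) atTop (nhds 0) :=
      tendsto_pow_atTop_nhds_zero_of_lt_one (by norm_num) (by norm_num)
    have := (h1.comp hdT).const_mul (4:ℝ)
    simpa using this

end
end

section
/- Let q ≥ 2 be an integer and let m, n, r be positive integers with r ≤ min{m, n}. Then 0 < 1 − ∏_{i=0}^{r−1} (1 − q^{i−m})(1 − q^{i−n}) < (q^{r−m} + q^{r−n}) / (1 − q^{−1}). -/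
open scoped BigOperators

lemma one_sub_prod_le_sum (s : Finset ℕ) (f : ℕ → ℝ) (h0 : ∀ i ∈ s, 0 ≤ f i)
    (h1 : ∀ i ∈ s, f i ≤ 1) :
    1 - ∏ i ∈ s, f i ≤ ∑ i ∈ s, (1 - f i) := by
  induction s using Finset.induction with
  | empty => simp
  | @insert a s hxa ih =>
    rw [Finset.prod_insert hxa, Finset.sum_insert hxa]
    have hP : ∏ i ∈ s, f i ≤ 1 :=
      Finset.prod_le_one (fun i hi => h0 i (Finset.mem_insert_of_mem hi))
        (fun i hi => h1 i (Finset.mem_insert_of_mem hi))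
    have ha0 : 0 ≤ f a := h0 a (Finset.mem_insert_self a s)
    have ha1 : f a ≤ 1 := h1 a (Finset.mem_insert_self a s)
    have ih' : 1 - ∏ i ∈ s, f i ≤ ∑ i ∈ s, (1 - f i) :=
      ih (fun i hi => h0 i (Finset.mem_insert_of_mem hi))
        (fun i hi => h1 i (Finset.mem_insert_of_mem hi))
    nlinarith [ih']

/-- The elementary estimate (2.1) from the proof of Lemma 2.1:
`0 < 1 - ∏_{i=0}^{r-1} (1 - q^{i-m})(1 - q^{i-n}) < (q^{r-m} + q^{r-n})/(1 - q⁻¹)`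
for an integer `q ≥ 2` and positive integers `m, n, r` with `r ≤ min{m,n}`. -/
theorem one_sub_prod_bound (q : ℕ) (hq : 2 ≤ q) (m n r : ℕ)
    (hm : 0 < m) (hn : 0 < n) (hr : 0 < r) (hrmn : r ≤ min m n) :
    0 < 1 - ∏ i ∈ Finset.range r,
        ((1 - (q : ℝ) ^ ((i : ℤ) - (m : ℤ))) * (1 - (q : ℝ) ^ ((i : ℤ) - (n : ℤ)))) ∧
    1 - ∏ i ∈ Finset.range r,
        ((1 - (q : ℝ) ^ ((i : ℤ) - (m : ℤ))) * (1 - (q : ℝ) ^ ((i : ℤ) - (n : ℤ)))) <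
      ((q : ℝ) ^ ((r : ℤ) - (m : ℤ)) + (q : ℝ) ^ ((r : ℤ) - (n : ℤ))) / (1 - (q : ℝ)⁻¹) := by
  set Q : ℝ := (q : ℝ) with hQdef
  have hQ1 : (1 : ℝ) < Q := by
    have : (2 : ℝ) ≤ Q := by show (2:ℝ) ≤ (q:ℝ); exact_mod_cast hq
    linarith
  have hQ0 : (0 : ℝ) < Q := by linarith
  have hrm : r ≤ m := le_trans hrmn (min_le_left m n)
  have hrn : r ≤ n := le_trans hrmn (min_le_right m n)
  -- bounds on the individual zpow factors
  have hzpos : ∀ (i : ℕ) (k : ℕ), 0 < Q ^ ((i : ℤ) - (k : ℤ)) := fun i k => zpow_pos hQ0 _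
  have hzlt : ∀ (i : ℕ) (k : ℕ), i < k → Q ^ ((i : ℤ) - (k : ℤ)) < 1 := by
    intro i k hik
    exact zpow_lt_one_of_neg₀ hQ1 (by omega)
  set f : ℕ → ℝ := fun i =>
    (1 - Q ^ ((i : ℤ) - (m : ℤ))) * (1 - Q ^ ((i : ℤ) - (n : ℤ))) with hfdef
  have hf0 : ∀ i ∈ Finset.range r, 0 ≤ f i := by
    intro i hi
    rw [Finset.mem_range] at hi
    have h1 := hzlt i m (by omega)
    have h2 := hzlt i n (by omega)
    have := hzpos i m
    have := hzpos i n
    simp only [hfdef]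
    nlinarith
  have hf1 : ∀ i ∈ Finset.range r, f i ≤ 1 := by
    intro i hi
    rw [Finset.mem_range] at hi
    have h1 := hzlt i m (by omega)
    have h2 := hzlt i n (by omega)
    have := hzpos i m
    have := hzpos i n
    simp only [hfdef]
    nlinarith
  constructor
  · -- positivity: the product is < 1
    have : ∏ i ∈ Finset.range r, f i < 1 := by
      obtain ⟨s, rfl⟩ : ∃ s, r = s + 1 := ⟨r - 1, by omega⟩
      rw [Finset.prod_range_succ']
      have hprod : ∏ i ∈ Finset.range s, f (i + 1) ≤ 1 := by
        apply Finset.prod_le_one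
        · intro i hi
          exact hf0 (i + 1) (by rw [Finset.mem_range] at hi ⊢; omega)
        · intro i hi
          exact hf1 (i + 1) (by rw [Finset.mem_range] at hi ⊢; omega)
      have hf00 : 0 ≤ f 0 := hf0 0 (Finset.mem_range.2 (by omega))
      have hf01 : f 0 < 1 := by
        have h1 := hzlt 0 m hm
        have h2 := hzlt 0 n hn
        have := hzpos 0 m
        have := hzpos 0 n
        simp only [hfdef]
        nlinarith
      calc (∏ i ∈ Finset.range s, f (i + 1)) * f 0 ≤ 1 * f 0 :=
            mul_le_of_le_one_left hf00 hprod |>.trans (by linarith)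
        _ < 1 := by linarith
    linarith
  · -- upper bound
    have hkey : ∀ k : ℕ, r ≤ k →
        ∑ i ∈ Finset.range r, Q ^ ((i : ℤ) - (k : ℤ)) < Q ^ ((r : ℤ) - (k : ℤ)) / (1 - Q⁻¹) := by
      intro k hk
      have hQne1 : Q ≠ 1 := ne_of_gt hQ1
      have hsum : ∑ i ∈ Finset.range r, Q ^ ((i : ℤ) - (k : ℤ))
          = Q ^ (-(k : ℤ)) * ∑ i ∈ Finset.range r, Q ^ i := by
        rw [Finset.mul_sum]
        apply Finset.sum_congr rfl
        intro i _
        rw [sub_eq_add_neg, add_comm, zpow_add₀ (ne_of_gt hQ0), zpow_natCast]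
      have hgeom : ∑ i ∈ Finset.range r, Q ^ i = (Q ^ r - 1) / (Q - 1) :=
        geom_sum_eq hQne1 r
      have hzr : Q ^ ((r : ℤ) - (k : ℤ)) = Q ^ (-(k : ℤ)) * Q ^ r := by
        rw [sub_eq_add_neg, add_comm, zpow_add₀ (ne_of_gt hQ0), zpow_natCast]
      rw [hsum, hgeom, hzr]
      have hden : 1 - Q⁻¹ = (Q - 1) / Q := by field_simp
      rw [hden]
      have hQm1 : (0 : ℝ) < Q - 1 := by linarith
      have hnegk : (0 : ℝ) < Q ^ (-(k : ℤ)) := zpow_pos hQ0 _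
      have hQr : (0 : ℝ) < Q ^ r := pow_pos hQ0 r
      have lhs_eq : Q ^ (-(k:ℤ)) * ((Q ^ r - 1) / (Q - 1))
          = (Q ^ (-(k:ℤ)) * (Q ^ r - 1)) / (Q - 1) := by ring
      have rhs_eq : Q ^ (-(k:ℤ)) * Q ^ r / ((Q - 1) / Q)
          = (Q ^ (-(k:ℤ)) * Q ^ r * Q) / (Q - 1) := by
        rw [div_div_eq_mul_div]
      rw [lhs_eq, rhs_eq, div_lt_div_iff₀ hQm1 hQm1]
      nlinarith [mul_pos (mul_pos hnegk hQm1) (mul_pos hQr hQm1), mul_pos hnegk hQm1]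
    have hstep : 1 - ∏ i ∈ Finset.range r, f i ≤
        ∑ i ∈ Finset.range r, (Q ^ ((i : ℤ) - (m : ℤ)) + Q ^ ((i : ℤ) - (n : ℤ))) := by
      refine le_trans (one_sub_prod_le_sum _ f hf0 hf1) ?_
      apply Finset.sum_le_sum
      intro i _
      have := hzpos i m
      have := hzpos i n
      simp only [hfdef]
      nlinarith
    rw [Finset.sum_add_distrib] at hstep
    have h1 := hkey m hrm
    have h2 := hkey n hrn
    calc 1 - ∏ i ∈ Finset.range r, f i
        ≤ _ := hstep
      _ < Q ^ ((r : ℤ) - (m : ℤ)) / (1 - Q⁻¹) + Q ^ ((r : ℤ) - (n : ℤ)) / (1 - Q⁻¹) :=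
          add_lt_add h1 h2
      _ = (Q ^ ((r : ℤ) - (m : ℤ)) + Q ^ ((r : ℤ) - (n : ℤ))) / (1 - Q⁻¹) :=
          by rw [← add_div]
end

section
/- Let q be a prime power and let A be a fixed nonempty proper subset of F_q. Let (m_k), (n_k), (r_k) be sequences of positive integers with m_k → ∞, n_k → ∞ and min{m_k, n_k} − r_k → ∞. For each k, let M_k be chosen uniformly from F_q^{m_k × n_k, r_k}, and let X_k ∈ F_q^{m_k × r_k}, Y_k ∈ F_q^{r_k × n_k} be independent and uniformly distributed. Write ct̃_A(N) := (ct_A(N) − μ_A(q,m_k,n_k,r_k)) / sqrt(σ_A²(q,m_k,n_k,r_k)). Then for every real number t, |P[ct̃_A(M_k) ≤ t] − P[ct̃_A(X_k Y_k) ≤ t]| → 0 as k → ∞. -/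
open scoped Classical BigOperators
open Filter

noncomputable section

/-- `ctA A M` is the number of entries of the matrix `M` that lie in `A`. -/
def ctA {F : Type*} [Fintype F] {m n : ℕ} (A : Finset F)
    (M : Matrix (Fin m) (Fin n) F) : ℕ :=
  (Finset.univ.filter (fun p : Fin m × Fin n => M p.1 p.2 ∈ A)).card

/-- `γ_A(q) = q⁻¹ #A - 1_A(0)`. -/
def gammaA {F : Type*} [Fintype F] [Zero F] (A : Finset F) : ℝ :=
  (A.card : ℝ) / (Fintype.card F : ℝ) - (if (0 : F) ∈ A then 1 else 0)

/-- `μ_A(q,m,n,r) = mn (q⁻¹ #A - q^{-r} γ_A(q))`. -/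
def muA {F : Type*} [Fintype F] [Zero F] (A : Finset F) (m n r : ℕ) : ℝ :=
  (m : ℝ) * n *
    ((A.card : ℝ) / (Fintype.card F : ℝ) - ((Fintype.card F : ℝ))⁻¹ ^ r * gammaA A)

/-- `σ_A²(q,m,n,r)`. -/
def sigmaA2 {F : Type*} [Fintype F] [Zero F] (A : Finset F) (m n r : ℕ) : ℝ :=
  (m : ℝ) * n *
      ((A.card : ℝ) / (Fintype.card F : ℝ) - ((Fintype.card F : ℝ))⁻¹ ^ r * gammaA A) *
      (1 - (A.card : ℝ) / (Fintype.card F : ℝ) + ((Fintype.card F : ℝ))⁻¹ ^ r * gammaA A) +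
    (m : ℝ) * n * ((m : ℝ) + (n : ℝ) - 2) * ((Fintype.card F : ℝ))⁻¹ ^ r *
      (1 - ((Fintype.card F : ℝ))⁻¹ ^ r) * gammaA A ^ 2

/-- The probability, under the uniform distribution on `m × n` matrices of rank `r`,
that the normalized count of entries in `A` is at most `t`. -/
def probNormCtLe (F : Type*) [Field F] [Fintype F] (A : Finset F) (m n r : ℕ) (t : ℝ) : ℝ :=
  (((rankSet F m n r).filter (fun M =>
      ((ctA A M : ℝ) - muA A m n r) / Real.sqrt (sigmaA2 A m n r) ≤ t)).card : ℝ) /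
    ((rankSet F m n r).card : ℝ)

/-- The probability, for independent uniform `X ∈ F^{m×r}`, `Y ∈ F^{r×n}`, that the
normalized count of entries of `XY` in `A` is at most `t`. -/
def probNormCtProdLe (F : Type*) [Field F] [Fintype F] (A : Finset F) (m n r : ℕ)
    (t : ℝ) : ℝ :=
  ((Finset.univ.filter
      (fun P : Matrix (Fin m) (Fin r) F × Matrix (Fin r) (Fin n) F =>
        ((ctA A (P.1 * P.2) : ℝ) - muA A m n r) / Real.sqrt (sigmaA2 A m n r) ≤ t)).card : ℝ) /
    (Fintype.card (Matrix (Fin m) (Fin r) F × Matrix (Fin r) (Fin n) F) : ℝ)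

/-! ### Auxiliary lemmas -/

namespace RankProdAux

open Matrix

set_option linter.unusedSectionVars false
set_option maxHeartbeats 1000000

variable {F : Type*} [Field F] [Fintype F]

lemma inj_of_rank {m r : ℕ} {X : Matrix (Fin m) (Fin r) F} (h : X.rank = r) :
    Function.Injective X.mulVecLin := by
  rw [← LinearMap.ker_eq_bot]
  have h2 := LinearMap.finrank_range_add_finrank_ker X.mulVecLin
  rw [← Submodule.finrank_eq_zero (R := F)]
  have h3 : Module.finrank F (Fin r → F) = r := by simp
  rw [h3] at h2
  have h4 : Module.finrank F ↥(LinearMap.range X.mulVecLin) = r := h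
  omega

lemma surj_of_rank {n r : ℕ} {Y : Matrix (Fin r) (Fin n) F} (h : Y.rank = r) :
    LinearMap.range Y.mulVecLin = ⊤ := by
  apply Submodule.eq_top_of_finrank_eq
  rw [show Module.finrank F ↥(LinearMap.range Y.mulVecLin) = r from h]
  simp

lemma rank_mul_eq {m n r : ℕ} (X : Matrix (Fin m) (Fin r) F) (Y : Matrix (Fin r) (Fin n) F) :
    (X * Y).rank = r ↔ X.rank = r ∧ Y.rank = r := by
  constructor
  · intro h
    have h1 : (X * Y).rank ≤ X.rank := Matrix.rank_mul_le_left X Y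
    have h2 : (X * Y).rank ≤ Y.rank := Matrix.rank_mul_le_right X Y
    have h3 : X.rank ≤ r := Matrix.rank_le_width X
    have h4 : Y.rank ≤ r := Matrix.rank_le_height Y
    omega
  · rintro ⟨hX, hY⟩
    have : (X * Y).rank = X.rank := by
      rw [Matrix.rank, Matrix.rank, Matrix.mulVecLin_mul, LinearMap.range_comp,
        surj_of_rank hY, Submodule.map_top]
    rw [this, hX]

lemma exists_right_inv {n r : ℕ} {Y : Matrix (Fin r) (Fin n) F}
    (h : LinearMap.range Y.mulVecLin = ⊤) :
    ∃ Z : Matrix (Fin n) (Fin r) F, Y * Z = 1 := by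
  have hs : Function.Surjective Y.mulVecLin := LinearMap.range_eq_top.mp h
  refine ⟨Matrix.of (fun i j => Classical.choose (hs (Pi.single j 1)) i), ?_⟩
  ext i j
  have hc := Classical.choose_spec (hs (Pi.single j 1))
  have h1 : (Y *ᵥ Classical.choose (hs (Pi.single j 1))) i = (Pi.single j (1:F) : Fin r → F) i := by
    rw [show Y *ᵥ _ = Y.mulVecLin _ from rfl, hc]
  simp only [Matrix.mul_apply, Matrix.of_apply, Matrix.one_apply]
  simp only [Matrix.mulVec, dotProduct] at h1
  rw [h1, Pi.single_apply]

lemma mul_left_cancel_of_inj {m r k : ℕ} {X : Matrix (Fin m) (Fin r) F}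
    (hX : Function.Injective X.mulVecLin) {A B : Matrix (Fin r) (Fin k) F}
    (h : X * A = X * B) : A = B := by
  have hcol : ∀ j, A *ᵥ Pi.single j 1 = B *ᵥ Pi.single j 1 := by
    intro j
    apply hX
    show X *ᵥ (A *ᵥ _) = X *ᵥ (B *ᵥ _)
    rw [Matrix.mulVec_mulVec, Matrix.mulVec_mulVec, h]
  ext i j
  have := congrFun (hcol j) i
  simpa [Matrix.mulVec_single_one] using this

lemma exists_factorization {m n r : ℕ} (M : Matrix (Fin m) (Fin n) F) (h : M.rank = r) :
    ∃ (X : Matrix (Fin m) (Fin r) F) (Y : Matrix (Fin r) (Fin n) F), X * Y = M := by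
  classical
  have hfr : Module.finrank F (LinearMap.range M.mulVecLin) = r := h
  let b : Module.Basis (Fin r) F (LinearMap.range M.mulVecLin) := Module.finBasisOfFinrankEq F _ hfr
  refine ⟨Matrix.of (fun i j => (b j : Fin m → F) i),
    Matrix.of (fun j k => b.repr ⟨M.mulVecLin (Pi.single k 1),
      LinearMap.mem_range_self _ _⟩ j), ?_⟩
  ext i k
  have hsum := b.sum_repr ⟨M.mulVecLin (Pi.single k 1), LinearMap.mem_range_self _ _⟩
  have h2 := congrArg (fun v : LinearMap.range M.mulVecLin => (v : Fin m → F) i) hsum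
  simp only [AddSubmonoidClass.coe_finset_sum, SetLike.val_smul, Finset.sum_apply,
    Pi.smul_apply, smul_eq_mul] at h2
  simp only [Matrix.mul_apply, Matrix.of_apply]
  calc ∑ j, (b j : Fin m → F) i * b.repr ⟨M.mulVecLin (Pi.single k 1), _⟩ j
      = ∑ j, b.repr ⟨M.mulVecLin (Pi.single k 1), LinearMap.mem_range_self _ _⟩ j
          * (b j : Fin m → F) i := by
        exact Finset.sum_congr rfl fun j _ => mul_comm _ _
    _ = M.mulVecLin (Pi.single k 1) i := h2
    _ = M i k := by simp [Matrix.mulVecLin_apply]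

lemma card_fiber {m n r : ℕ} {M : Matrix (Fin m) (Fin n) F} (h : M.rank = r) :
    (Finset.univ.filter
      (fun P : Matrix (Fin m) (Fin r) F × Matrix (Fin r) (Fin n) F => P.1 * P.2 = M)).card
      = Fintype.card (GL (Fin r) F) := by
  classical
  obtain ⟨X₀, Y₀, hfac⟩ := exists_factorization M h
  have hr : X₀.rank = r ∧ Y₀.rank = r := (rank_mul_eq X₀ Y₀).mp (by rw [hfac]; exact h)
  have hinj := inj_of_rank hr.1
  obtain ⟨W, hW⟩ := exists_right_inv (surj_of_rank hr.2)
  rw [Fintype.card, eq_comm]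
  refine Finset.card_bij (fun G _ => ((X₀ * (G : GL (Fin r) F).1, (G⁻¹ : GL (Fin r) F).1 * Y₀) :
    Matrix (Fin m) (Fin r) F × Matrix (Fin r) (Fin n) F)) ?_ ?_ ?_
  · intro G _
    simp only [Finset.mem_filter, Finset.mem_univ, true_and]
    calc X₀ * (G : GL (Fin r) F).1 * ((G⁻¹ : GL (Fin r) F).1 * Y₀)
        = X₀ * ((G : GL (Fin r) F).1 * (G⁻¹ : GL (Fin r) F).1) * Y₀ := by
          simp only [Matrix.mul_assoc]
      _ = M := by rw [Units.mul_inv]; rw [Matrix.mul_one]; exact hfac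
  · intro G₁ _ G₂ _ hEq
    have h1 : X₀ * (G₁ : GL (Fin r) F).1 = X₀ * (G₂ : GL (Fin r) F).1 :=
      congrArg Prod.fst hEq
    exact Units.ext (mul_left_cancel_of_inj hinj h1)
  · intro P hP
    simp only [Finset.mem_filter, Finset.mem_univ, true_and] at hP
    have hrP : P.1.rank = r ∧ P.2.rank = r := (rank_mul_eq P.1 P.2).mp (by rw [hP]; exact h)
    obtain ⟨Z, hZ⟩ := exists_right_inv (surj_of_rank hrP.2)
    set G := Y₀ * Z with hG
    have hXG : X₀ * G = P.1 := by
      calc X₀ * (Y₀ * Z) = (X₀ * Y₀) * Z := by rw [Matrix.mul_assoc]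
        _ = (P.1 * P.2) * Z := by rw [hfac, hP]
        _ = P.1 * (P.2 * Z) := by rw [Matrix.mul_assoc]
        _ = P.1 := by rw [hZ, Matrix.mul_one]
    have hGY : G * P.2 = Y₀ := by
      apply mul_left_cancel_of_inj hinj
      calc X₀ * (G * P.2) = (X₀ * G) * P.2 := by simp only [hG, Matrix.mul_assoc]
        _ = M := by rw [hXG, hP]
        _ = X₀ * Y₀ := hfac.symm
    have hGunit : IsUnit G := by
      apply IsUnit.of_mul_eq_one (P.2 * W)
      calc G * (P.2 * W) = (G * P.2) * W := by simp only [hG, Matrix.mul_assoc]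
        _ = 1 := by rw [hGY, hW]
    refine ⟨hGunit.unit, Finset.mem_univ _, ?_⟩
    have hu : (hGunit.unit : Matrix (Fin r) (Fin r) F) = G := hGunit.unit_spec
    have hinvu : ((hGunit.unit⁻¹ : GL (Fin r) F) : Matrix (Fin r) (Fin r) F) * Y₀ = P.2 := by
      calc (hGunit.unit⁻¹ : GL (Fin r) F).1 * Y₀
          = (hGunit.unit⁻¹ : GL (Fin r) F).1 * (G * P.2) := by rw [hGY]
        _ = ((hGunit.unit⁻¹ : GL (Fin r) F).1 * (hGunit.unit : GL (Fin r) F).1) * P.2 := by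
            rw [hu]; simp only [hG, Matrix.mul_assoc]
        _ = P.2 := by rw [Units.inv_mul, Matrix.one_mul]
    exact Prod.ext (by simp [hu, hXG]) (by simpa using hinvu)

lemma card_pred_pairs {m n r : ℕ} (pred : Matrix (Fin m) (Fin n) F → Prop) :
    (Finset.univ.filter
      (fun P : Matrix (Fin m) (Fin r) F × Matrix (Fin r) (Fin n) F =>
        pred (P.1 * P.2) ∧ (P.1 * P.2).rank = r)).card
      = Fintype.card (GL (Fin r) F) * ((rankSet F m n r).filter pred).card := by
  classical
  rw [Finset.card_eq_sum_card_fiberwise (f := fun P => P.1 * P.2)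
    (t := (rankSet F m n r).filter pred) (fun P hP => by
      simp only [Finset.mem_coe, Finset.mem_filter, Finset.mem_univ, true_and, rankSet] at hP ⊢
      exact ⟨hP.2, hP.1⟩)]
  rw [Finset.sum_congr rfl (fun M hM => ?_), Finset.sum_const, smul_eq_mul, mul_comm]
  have hM' : M.rank = r ∧ pred M := by
    simpa [rankSet, and_comm] using hM
  rw [Finset.filter_filter, ← card_fiber hM'.1]
  congr 1
  apply Finset.filter_congr
  intro P _
  constructor
  · rintro ⟨_, hPM⟩; exact hPM
  · intro hPM; rw [hPM]; exact ⟨⟨hM'.2, hM'.1⟩, rfl⟩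

lemma card_full_pairs {m n r : ℕ} :
    (Finset.univ.filter
      (fun P : Matrix (Fin m) (Fin r) F × Matrix (Fin r) (Fin n) F =>
        (P.1 * P.2).rank = r)).card
      = Fintype.card (GL (Fin r) F) * (rankSet F m n r).card := by
  have := card_pred_pairs (F := F) (m := m) (n := n) (r := r) (fun _ => True)
  simpa using this

lemma full_pairs_eq_product {m n r : ℕ} :
    (Finset.univ.filter
      (fun P : Matrix (Fin m) (Fin r) F × Matrix (Fin r) (Fin n) F =>
        (P.1 * P.2).rank = r))
      = (Finset.univ.filter (fun X : Matrix (Fin m) (Fin r) F => X.rank = r)) ×ˢ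
        (Finset.univ.filter (fun Y : Matrix (Fin r) (Fin n) F => Y.rank = r)) := by
  ext P
  simp only [Finset.mem_filter, Finset.mem_univ, true_and, Finset.mem_product]
  exact rank_mul_eq P.1 P.2

lemma rank_eq_iff_linindep {m r : ℕ} (X : Matrix (Fin m) (Fin r) F) :
    X.rank = r ↔ LinearIndependent F Xᵀ := by
  rw [show LinearIndependent F Xᵀ ↔ _ from linearIndependent_iff_card_eq_finrank_span, Matrix.rank_eq_finrank_span_cols,
    Set.finrank, Fintype.card_fin]
  exact eq_comm

lemma card_rank_matrix {m r : ℕ} (h : r ≤ m) :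
    ((Finset.univ.filter (fun X : Matrix (Fin m) (Fin r) F => X.rank = r)).card : ℕ)
      = ∏ i : Fin r, (Fintype.card F ^ m - Fintype.card F ^ (i : ℕ)) := by
  classical
  have e : {X : Matrix (Fin m) (Fin r) F // X.rank = r} ≃
      {s : Fin r → (Fin m → F) // LinearIndependent F s} :=
    { toFun := fun X => ⟨X.1ᵀ, (rank_eq_iff_linindep X.1).mp X.2⟩
      invFun := fun s => ⟨(Matrix.of s.1)ᵀ, by
        rw [rank_eq_iff_linindep, Matrix.transpose_transpose]; exact s.2⟩
      left_inv := fun X => Subtype.ext (Matrix.transpose_transpose _)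
      right_inv := fun s => Subtype.ext rfl }
  have hc := card_linearIndependent (K := F) (V := Fin m → F)
    (k := r) (by simpa [Module.finrank_fintype_fun_eq_card] using h)
  rw [← Fintype.card_subtype, Fintype.card_congr e, ← Nat.card_eq_fintype_card, hc]
  simp [Module.finrank_fintype_fun_eq_card]

lemma card_matrix_space (m r : ℕ) :
    Fintype.card (Matrix (Fin m) (Fin r) F) = Fintype.card F ^ (m * r) := by
  have e : Matrix (Fin m) (Fin r) F ≃ (Fin m → Fin r → F) := Equiv.refl _
  rw [Fintype.card_congr e]
  simp [Fintype.card_fun, ← pow_mul, Nat.mul_comm r m]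

/-! ### Real-arithmetic core -/

lemma core_ineq (T N c b Q full : ℕ) (hQ : 0 < Q) (hT : T ≤ N) (hfull : full = c * N)
    (hb : b + full ≤ Q) :
    |(T : ℝ) / N - ((c * T + b : ℕ) : ℝ) / Q| ≤ 2 * (1 - (full : ℝ) / Q) := by
  have hQ' : (0:ℝ) < Q := by exact_mod_cast hQ
  have hQ0 : (Q:ℝ) ≠ 0 := ne_of_gt hQ'
  have hβ0 : (0:ℝ) ≤ (b:ℝ)/Q := div_nonneg (Nat.cast_nonneg b) hQ'.le
  have hαβ : (b:ℝ)/Q ≤ 1 - (full:ℝ)/Q := by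
    rw [div_le_iff₀ hQ', sub_mul, one_mul, div_mul_eq_mul_div, mul_div_assoc, div_self hQ0,
      mul_one]
    have : (b:ℝ) + full ≤ Q := by exact_mod_cast hb
    linarith
  have hα1 : (0:ℝ) ≤ 1 - (full:ℝ)/Q := le_trans hβ0 hαβ
  push_cast
  rcases Nat.eq_zero_or_pos N with hN | hN
  · subst hN
    have hT0 : T = 0 := Nat.le_zero.mp hT
    have hf0 : full = 0 := by omega
    subst hT0; subst hfull
    simp only [Nat.cast_zero, div_zero, mul_zero, zero_sub, abs_neg, add_zero, zero_add]
    rw [abs_of_nonneg hβ0]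
    simp only [Nat.mul_zero, Nat.cast_zero, zero_div] at hαβ ⊢
    linarith
  · have hN' : (0:ℝ) < N := by exact_mod_cast hN
    have hN0 : (N:ℝ) ≠ 0 := ne_of_gt hN'
    have hu0 : (0:ℝ) ≤ (T:ℝ)/N := div_nonneg (Nat.cast_nonneg T) hN'.le
    have hu1 : (T:ℝ)/N ≤ 1 := by
      rw [div_le_one hN']; exact_mod_cast hT
    have hkey : (T:ℝ)/N - ((c:ℝ) * T + b)/Q
        = ((T:ℝ)/N) * (1 - (full:ℝ)/Q) - (b:ℝ)/Q := by
      have hfull' : (full:ℝ) = (c:ℝ) * N := by exact_mod_cast hfull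
      field_simp
      ring_nf
      linear_combination (T:ℝ) * hfull'
    rw [hkey, abs_le]
    constructor
    · nlinarith
    · nlinarith

lemma one_sub_sum_le_prod {ι : Type*} (s : Finset ι) (f : ι → ℝ)
    (h0 : ∀ i ∈ s, 0 ≤ f i) (h1 : ∀ i ∈ s, f i ≤ 1) :
    1 - ∑ i ∈ s, f i ≤ ∏ i ∈ s, (1 - f i) := by
  classical
  induction s using Finset.cons_induction with
  | empty => simp
  | cons a s ha ih =>
    rw [Finset.prod_cons, Finset.sum_cons]
    have h0' : ∀ i ∈ s, 0 ≤ f i := fun i hi => h0 i (Finset.mem_cons_of_mem hi)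
    have h1' : ∀ i ∈ s, f i ≤ 1 := fun i hi => h1 i (Finset.mem_cons_of_mem hi)
    have ihs := ih h0' h1'
    have ha0 : 0 ≤ f a := h0 a (Finset.mem_cons_self a s)
    have ha1 : f a ≤ 1 := h1 a (Finset.mem_cons_self a s)
    have hs0 : 0 ≤ ∑ i ∈ s, f i := Finset.sum_nonneg h0'
    have hp0 : 0 ≤ ∏ i ∈ s, (1 - f i) :=
      Finset.prod_nonneg fun i hi => by linarith [h1' i hi]
    nlinarith [mul_le_mul_of_nonneg_left ihs (by linarith : (0:ℝ) ≤ 1 - f a)]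

lemma sum_pow_le {q : ℕ} (hq : 2 ≤ q) (r : ℕ) :
    ∑ i ∈ Finset.range r, (q:ℝ)^i ≤ (q:ℝ)^r := by
  induction r with
  | zero => simp
  | succ r ih =>
    rw [Finset.sum_range_succ, pow_succ]
    have hq' : (2:ℝ) ≤ q := by exact_mod_cast hq
    nlinarith [pow_nonneg (by linarith : (0:ℝ) ≤ (q:ℕ)) r]

lemma frac_bound {q m r : ℕ} (hq : 2 ≤ q) (h : r ≤ m) :
    1 - ((∏ i : Fin r, (q^m - q^(i:ℕ)) : ℕ) : ℝ) / ((q:ℝ)^(m*r))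
      ≤ (q:ℝ)^((r:ℤ) - (m:ℤ)) := by
  have hq1 : (1:ℝ) ≤ (q:ℝ) := by exact_mod_cast Nat.one_le_of_lt hq
  have hq0 : (0:ℝ) < q := by linarith
  have hq0' : (q:ℝ) ≠ 0 := ne_of_gt hq0
  have hcast : ((∏ i : Fin r, (q^m - q^(i:ℕ)) : ℕ) : ℝ)
      = ∏ i : Fin r, ((q:ℝ)^m - (q:ℝ)^(i:ℕ)) := by
    rw [Nat.cast_prod]
    refine Finset.prod_congr rfl fun i _ => ?_
    have hle : q^(i:ℕ) ≤ q^m := Nat.pow_le_pow_right (by omega) (by omega)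
    push_cast [Nat.cast_sub hle]
    ring
  have hpow : ((q:ℝ)^(m*r)) = ∏ _i : Fin r, (q:ℝ)^m := by
    rw [Finset.prod_const, Finset.card_univ, Fintype.card_fin, ← pow_mul]
  rw [hcast, hpow, ← Finset.prod_div_distrib]
  have hfac : ∀ i : Fin r, ((q:ℝ)^m - (q:ℝ)^(i:ℕ)) / (q:ℝ)^m = 1 - (q:ℝ)^(i:ℕ)/(q:ℝ)^m := by
    intro i
    field_simp
  simp only [hfac]
  have hbound := one_sub_sum_le_prod Finset.univ (fun i : Fin r => (q:ℝ)^(i:ℕ)/(q:ℝ)^m)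
    (fun i _ => by positivity)
    (fun i _ => by
      rw [div_le_one (by positivity)]
      exact pow_le_pow_right₀ hq1 (by omega))
  have hsum : ∑ i : Fin r, (q:ℝ)^(i:ℕ)/(q:ℝ)^m ≤ (q:ℝ)^((r:ℤ) - (m:ℤ)) := by
    rw [← Finset.sum_div, zpow_sub₀ hq0', zpow_natCast, zpow_natCast,
      div_le_div_iff_of_pos_right (by positivity)]
    rw [Fin.sum_univ_eq_sum_range]
    exact sum_pow_le hq r
  linarith

/-- Key quantitative bound: the difference of the two probabilities is at most
`2 * (q^{r-m} + q^{r-n})`, provided `r ≤ m` and `r ≤ n`. -/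
lemma key_bound (A : Finset F) {m n r : ℕ} (hrm : r ≤ m) (hrn : r ≤ n) (t : ℝ) :
    |probNormCtLe F A m n r t - probNormCtProdLe F A m n r t|
      ≤ 2 * ((Fintype.card F : ℝ)^((r:ℤ) - (m:ℤ)) + (Fintype.card F : ℝ)^((r:ℤ) - (n:ℤ))) := by
  classical
  set q : ℕ := Fintype.card F with hqdef
  have hq : 2 ≤ q := Fintype.one_lt_card
  set pred : Matrix (Fin m) (Fin n) F → Prop := fun M =>
    ((ctA A M : ℝ) - muA A m n r) / Real.sqrt (sigmaA2 A m n r) ≤ t with hpred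
  set c : ℕ := Fintype.card (GL (Fin r) F) with hc
  set N : ℕ := (rankSet F m n r).card with hN
  set T : ℕ := ((rankSet F m n r).filter pred).card with hT
  set Q : ℕ := Fintype.card (Matrix (Fin m) (Fin r) F × Matrix (Fin r) (Fin n) F) with hQdef
  set full : ℕ := (Finset.univ.filter
      (fun P : Matrix (Fin m) (Fin r) F × Matrix (Fin r) (Fin n) F =>
        (P.1 * P.2).rank = r)).card with hfulldef
  set b : ℕ := (Finset.univ.filter
      (fun P : Matrix (Fin m) (Fin r) F × Matrix (Fin r) (Fin n) F =>
        pred (P.1 * P.2) ∧ ¬ ((P.1 * P.2).rank = r))).card with hb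
  have hQpos : 0 < Q := Fintype.card_pos
  have hTN : T ≤ N := Finset.card_le_card (Finset.filter_subset _ _)
  have hfull : full = c * N := card_full_pairs
  have hsplitW : (Finset.univ.filter
      (fun P : Matrix (Fin m) (Fin r) F × Matrix (Fin r) (Fin n) F =>
        pred (P.1 * P.2))).card = c * T + b := by
    have h1 := Finset.card_filter_add_card_filter_not
      (s := (Finset.univ.filter
        (fun P : Matrix (Fin m) (Fin r) F × Matrix (Fin r) (Fin n) F => pred (P.1 * P.2))))
      (p := fun P => (P.1 * P.2).rank = r)
    simp only [Finset.filter_filter] at h1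
    rw [← h1, card_pred_pairs pred]
  have hbfull : b + full ≤ Q := by
    have hsub : (Finset.univ.filter
        (fun P : Matrix (Fin m) (Fin r) F × Matrix (Fin r) (Fin n) F =>
          pred (P.1 * P.2) ∧ ¬ ((P.1 * P.2).rank = r))).card
        ≤ (Finset.univ.filter
        (fun P : Matrix (Fin m) (Fin r) F × Matrix (Fin r) (Fin n) F =>
          ¬ ((P.1 * P.2).rank = r))).card := by
      apply Finset.card_le_card
      intro P hP
      simp only [Finset.mem_filter] at hP ⊢
      exact ⟨hP.1, hP.2.2⟩
    have h2 := Finset.card_filter_add_card_filter_not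
      (s := (Finset.univ : Finset (Matrix (Fin m) (Fin r) F × Matrix (Fin r) (Fin n) F)))
      (p := fun P => (P.1 * P.2).rank = r)
    rw [Finset.card_univ] at h2
    omega
  have hmain : |probNormCtLe F A m n r t - probNormCtProdLe F A m n r t|
      ≤ 2 * (1 - (full : ℝ) / Q) := by
    have h1 : probNormCtLe F A m n r t = (T : ℝ) / N := rfl
    have h2 : probNormCtProdLe F A m n r t = ((c * T + b : ℕ) : ℝ) / Q := by
      unfold probNormCtProdLe
      rw [← hsplitW]
    rw [h1, h2]
    exact core_ineq T N c b Q full hQpos hTN hfull hbfull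
  refine le_trans hmain ?_
  -- now bound `1 - full/Q`
  have hQQ : Q = q ^ (m * r) * q ^ (r * n) := by
    rw [hQdef, Fintype.card_prod, card_matrix_space, card_matrix_space]
  set cm : ℕ := (Finset.univ.filter (fun X : Matrix (Fin m) (Fin r) F => X.rank = r)).card
    with hcm
  set cn : ℕ := (Finset.univ.filter (fun Y : Matrix (Fin r) (Fin n) F => Y.rank = r)).card
    with hcn
  have hfullprod : full = cm * cn := by
    rw [hfulldef, full_pairs_eq_product, Finset.card_product]
  have hq1 : (1:ℝ) ≤ (q:ℝ) := by exact_mod_cast Nat.one_le_of_lt hq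
  have hq0 : (0:ℝ) < (q:ℝ) := by linarith
  have hQm : (0:ℝ) < (q:ℝ) ^ (m * r) := by positivity
  have hQn : (0:ℝ) < (q:ℝ) ^ (r * n) := by positivity
  have hpm1 : ((cm:ℝ) / (q:ℝ)^(m*r)) ≤ 1 := by
    rw [div_le_one hQm]
    have : cm ≤ q ^ (m*r) := by
      rw [hcm, ← card_matrix_space (F := F) m r]
      exact le_trans (Finset.card_filter_le _ _) (le_of_eq (Finset.card_univ))
    exact_mod_cast this
  have hpn1 : ((cn:ℝ) / (q:ℝ)^(r*n)) ≤ 1 := by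
    rw [div_le_one hQn]
    have : cn ≤ q ^ (r*n) := by
      have := card_matrix_space (F := F) r n
      rw [hcn, ← this]
      exact le_trans (Finset.card_filter_le _ _) (le_of_eq (Finset.card_univ))
    exact_mod_cast this
  have hpm0 : (0:ℝ) ≤ (cm:ℝ) / (q:ℝ)^(m*r) := by positivity
  have hpn0 : (0:ℝ) ≤ (cn:ℝ) / (q:ℝ)^(r*n) := by positivity
  have hpmb : 1 - (cm:ℝ) / (q:ℝ)^(m*r) ≤ (q:ℝ)^((r:ℤ) - (m:ℤ)) := by
    have := frac_bound (q := q) (m := m) (r := r) hq hrm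
    rw [hcm, card_rank_matrix hrm]
    exact this
  have hpnb : 1 - (cn:ℝ) / (q:ℝ)^(r*n) ≤ (q:ℝ)^((r:ℤ) - (n:ℤ)) := by
    have h1 := frac_bound (q := q) (m := n) (r := r) hq hrn
    have h2 : cn = ∏ i : Fin r, (q ^ n - q ^ (i:ℕ)) := by
      rw [hcn]
      have e : {Y : Matrix (Fin r) (Fin n) F // Y.rank = r} ≃
          {X : Matrix (Fin n) (Fin r) F // X.rank = r} :=
        { toFun := fun Y => ⟨Y.1ᵀ, by rw [Matrix.rank_transpose]; exact Y.2⟩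
          invFun := fun X => ⟨X.1ᵀ, by rw [Matrix.rank_transpose]; exact X.2⟩
          left_inv := fun Y => Subtype.ext (Matrix.transpose_transpose _)
          right_inv := fun X => Subtype.ext (Matrix.transpose_transpose _) }
      rw [← Fintype.card_subtype, Fintype.card_congr e, Fintype.card_subtype]
      exact card_rank_matrix hrn
    rw [h2, mul_comm r n]
    exact h1
  have halpha : 1 - (full:ℝ)/Q ≤ (q:ℝ)^((r:ℤ) - (m:ℤ)) + (q:ℝ)^((r:ℤ) - (n:ℤ)) := by
    have hsplit : (full:ℝ)/Q = ((cm:ℝ) / (q:ℝ)^(m*r)) * ((cn:ℝ) / (q:ℝ)^(r*n)) := by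
      rw [hfullprod, hQQ, div_mul_div_comm]
      push_cast
      ring
    rw [hsplit]
    nlinarith [mul_nonneg hpm0 (sub_nonneg.mpr hpn1), mul_le_mul_of_nonneg_left hpnb hpm0]
  linarith

end RankProdAux

/-- Equation (2.2): the distribution functions of the normalized counts for the rank model
and the product model agree asymptotically, as `m, n → ∞` with `min{m,n} - r → ∞`. -/
theorem probNormCt_rank_sub_prod_tendsto_zero
    {F : Type*} [Field F] [Fintype F]
    (A : Finset F) (hA : A.Nonempty) (hA' : A ≠ Finset.univ)
    (m n r : ℕ → ℕ)
    (hm0 : ∀ k, 0 < m k) (hn0 : ∀ k, 0 < n k) (hr0 : ∀ k, 0 < r k)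
    (hm : Tendsto m atTop atTop) (hn : Tendsto n atTop atTop)
    (hmnr : Tendsto (fun k => (min (m k) (n k) : ℤ) - (r k : ℤ)) atTop atTop) :
    ∀ t : ℝ, Tendsto (fun k =>
        |probNormCtLe F A (m k) (n k) (r k) t - probNormCtProdLe F A (m k) (n k) (r k) t|)
      atTop (nhds 0) := by
  intro t
  classical
  set q : ℕ := Fintype.card F with hqdef
  have hq : 2 ≤ q := Fintype.one_lt_card
  have hq1 : (1:ℝ) ≤ (q:ℝ) := by exact_mod_cast Nat.one_le_of_lt hq
  have hq0 : (0:ℝ) < (q:ℝ) := by linarith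
  set d : ℕ → ℤ := fun k => (min (m k) (n k) : ℤ) - (r k : ℤ) with hd
  -- the dominating sequence
  have hxlt : (q:ℝ)⁻¹ < 1 := by
    rw [inv_lt_one_iff₀]
    right
    exact_mod_cast hq
  have hx0 : (0:ℝ) ≤ (q:ℝ)⁻¹ := by positivity
  have htoNat : Tendsto (fun k => (d k).toNat) atTop atTop := by
    rw [tendsto_atTop]
    intro bb
    filter_upwards [hmnr.eventually_ge_atTop (bb : ℤ)] with k hk
    omega
  have hg : Tendsto (fun k => 4 * ((q:ℝ)⁻¹) ^ ((d k).toNat)) atTop (nhds 0) := by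
    have := (tendsto_pow_atTop_nhds_zero_of_lt_one hx0 hxlt).comp htoNat
    have h4 := this.const_mul (4:ℝ)
    simpa using h4
  apply squeeze_zero' (Eventually.of_forall (fun k => abs_nonneg _)) _ hg
  filter_upwards [hmnr.eventually_ge_atTop 0] with k hk
  have hmin : (r k : ℤ) ≤ min ((m k):ℤ) ((n k):ℤ) := by
    have h1 : (0:ℤ) ≤ min ((m k):ℤ) ((n k):ℤ) - (r k : ℤ) := hk
    linarith
  have hrm : r k ≤ m k := by
    have h3 : (r k : ℤ) ≤ (m k : ℤ) := hmin.trans (min_le_left _ _)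
    exact_mod_cast h3
  have hrn : r k ≤ n k := by
    have h3 : (r k : ℤ) ≤ (n k : ℤ) := hmin.trans (min_le_right _ _)
    exact_mod_cast h3
  have hb := RankProdAux.key_bound (F := F) A hrm hrn t
  refine le_trans hb ?_
  have hzm : (q:ℝ)^((r k:ℤ) - (m k:ℤ)) ≤ ((q:ℝ)⁻¹) ^ ((d k).toNat) := by
    have h1 : ((r k:ℤ) - (m k:ℤ)) ≤ -(d k) := by
      simp only [hd]
      have := min_le_left ((m k):ℤ) ((n k):ℤ)
      linarith
    have h2 : (q:ℝ)^((r k:ℤ) - (m k:ℤ)) ≤ (q:ℝ)^(-(d k)) :=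
      zpow_le_zpow_right₀ hq1 h1
    refine le_trans h2 (le_of_eq ?_)
    rw [← zpow_natCast ((q:ℝ)⁻¹) ((d k).toNat), inv_zpow, ← zpow_neg]
    congr 1
    rw [Int.toNat_of_nonneg hk]
  have hzn : (q:ℝ)^((r k:ℤ) - (n k:ℤ)) ≤ ((q:ℝ)⁻¹) ^ ((d k).toNat) := by
    have h1 : ((r k:ℤ) - (n k:ℤ)) ≤ -(d k) := by
      simp only [hd]
      have := min_le_right ((m k):ℤ) ((n k):ℤ)
      linarith
    have h2 : (q:ℝ)^((r k:ℤ) - (n k:ℤ)) ≤ (q:ℝ)^(-(d k)) :=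
      zpow_le_zpow_right₀ hq1 h1
    refine le_trans h2 (le_of_eq ?_)
    rw [← zpow_natCast ((q:ℝ)⁻¹) ((d k).toNat), inv_zpow, ← zpow_neg]
    congr 1
    rw [Int.toNat_of_nonneg hk]
  linarith

end
end

section
/- Let q be a prime power, A ⊆ F_q, and let m, n, r be positive integers. Let X ∈ F_q^{m×r} and Y ∈ F_q^{r×n} be independent random matrices, each uniformly distributed over all matrices of its size. Then the expectation of ct_A(XY) equals μ_A(q,m,n,r) = mn(q^{-1}#A − q^{-r}γ_A(q)). -/
open scoped Classical BigOperators
open Filter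

noncomputable section

section Aux

variable {F : Type*}

private lemma sum_eval {α β : Type*} [Fintype α] [DecidableEq α] [Fintype β] (i : α) (h : β → ℝ) :
    ∑ g : α → β, h (g i) = (Fintype.card β : ℝ) ^ (Fintype.card α - 1) * ∑ b, h b := by
  rw [← Equiv.sum_comp (Equiv.funSplitAt i β).symm (fun g => h (g i))]
  simp only [Equiv.funSplitAt_symm_apply, dif_pos rfl, dite_true]
  rw [Fintype.sum_prod_type]
  simp only [Finset.sum_const, Finset.card_univ, nsmul_eq_mul, Fintype.card_fun,
    Fintype.card_subtype_compl, Fintype.card_subtype_eq]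
  rw [← Finset.mul_sum]
  push_cast
  ring

private lemma sum_eval2 {α β γ : Type*} [Fintype α] [DecidableEq α] [Fintype β] [DecidableEq β]
    [Fintype γ] (j : β) (h : (α → γ) → ℝ) :
    ∑ g : α → β → γ, h (fun a => g a j) =
      (Fintype.card (α → γ) : ℝ) ^ (Fintype.card β - 1) * ∑ v : α → γ, h v := by
  rw [← sum_eval j h, ← Equiv.sum_comp (Equiv.piComm fun (_ : α) (_ : β) => γ)
    (fun g' => h (g' j))]
  rfl

private lemma sum_affine [Field F] [Fintype F] (b c : F) (hb : b ≠ 0) (f : F → ℝ) :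
    ∑ x : F, f (b * x + c) = ∑ a : F, f a :=
  Fintype.sum_bijective (fun x => b * x + c)
    (Finite.injective_iff_bijective.1 fun x y h => by
      exact mul_left_cancel₀ hb (add_right_cancel h)) _ _ (fun _ => rfl)

private lemma sum_dot [Field F] [Fintype F] {r : ℕ} (u : Fin r → F) (hu : u ≠ 0)
    (f : F → ℝ) :
    ∑ v : Fin r → F, f (∑ k, u k * v k) = (Fintype.card F : ℝ) ^ (r - 1) * ∑ a, f a := by
  obtain ⟨k0, hk0⟩ : ∃ k, u k ≠ 0 := by
    by_contra h
    push_neg at h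
    exact hu (funext h)
  rw [← Equiv.sum_comp (Equiv.funSplitAt k0 F).symm (fun v => f (∑ k, u k * v k))]
  rw [Fintype.sum_prod_type, Finset.sum_comm]
  have hdot : ∀ (w : { j : Fin r // j ≠ k0 } → F) (x : F),
      ∑ k, u k * ((Equiv.funSplitAt k0 F).symm (x, w)) k
        = u k0 * x + ∑ j : { j : Fin r // j ≠ k0 }, u j * w j := by
    intro w x
    rw [← Finset.add_sum_erase _ _ (Finset.mem_univ k0)]
    congr 1
    · simp
    · rw [Finset.sum_subtype (Finset.univ.erase k0)
        (by simp : ∀ j : Fin r, j ∈ Finset.univ.erase k0 ↔ j ≠ k0)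
        (fun k => u k * ((Equiv.funSplitAt k0 F).symm (x, w)) k)]
      refine Finset.sum_congr rfl fun j _ => ?_
      simp [Equiv.funSplitAt_symm_apply, dif_neg j.2]
  have hline : ∀ w : { j : Fin r // j ≠ k0 } → F,
      (∑ x : F, f (∑ k, u k * ((Equiv.funSplitAt k0 F).symm (x, w)) k)) = ∑ a, f a := by
    intro w
    simp_rw [hdot w]
    exact sum_affine _ _ hk0 f
  simp_rw [hline]
  rw [Finset.sum_const, Finset.card_univ, nsmul_eq_mul, Fintype.card_fun,
    Fintype.card_subtype_compl, Fintype.card_subtype_eq, Fintype.card_fin]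
  push_cast
  ring

private lemma hcount [Field F] [Fintype F] (A : Finset F) (r : ℕ) :
    ∑ u : Fin r → F, ∑ v : Fin r → F, (if (∑ k, u k * v k) ∈ A then (1:ℝ) else 0)
      = (if (0:F) ∈ A then ((Fintype.card F : ℝ)) ^ r else 0)
        + ((Fintype.card F : ℝ) ^ r - 1) * (Fintype.card F : ℝ) ^ (r - 1) * A.card := by
  rw [← Finset.add_sum_erase _ _ (Finset.mem_univ (0 : Fin r → F))]
  congr 1
  · by_cases h : (0:F) ∈ A <;>
      simp [h, Finset.sum_const, Fintype.card_fun]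
  · have h1 : ∀ u ∈ Finset.univ.erase (0 : Fin r → F),
        (∑ v : Fin r → F, if (∑ k, u k * v k) ∈ A then (1:ℝ) else 0)
          = (Fintype.card F : ℝ) ^ (r - 1) * A.card := by
      intro u hu
      rw [sum_dot u (Finset.ne_of_mem_erase hu) (fun a => if a ∈ A then (1:ℝ) else 0)]
      simp
    rw [Finset.sum_congr rfl h1, Finset.sum_const,
      Finset.card_erase_of_mem (Finset.mem_univ _), Finset.card_univ,
      nsmul_eq_mul, Nat.cast_sub Fintype.card_pos, Fintype.card_fun, Fintype.card_fin]
    push_cast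
    ring

private lemma sum_pair [Field F] [Fintype F] (A : Finset F) {m n r : ℕ}
    (i : Fin m) (j : Fin n) :
    ∑ P : Matrix (Fin m) (Fin r) F × Matrix (Fin r) (Fin n) F,
      (if (P.1 * P.2) i j ∈ A then (1:ℝ) else 0)
    = ((Fintype.card F : ℝ) ^ r) ^ (m - 1) * ((Fintype.card F : ℝ) ^ r) ^ (n - 1) *
      ((if (0:F) ∈ A then ((Fintype.card F : ℝ)) ^ r else 0)
        + ((Fintype.card F : ℝ) ^ r - 1) * (Fintype.card F : ℝ) ^ (r - 1) * A.card) := by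
  rw [Fintype.sum_prod_type]
  calc
    ∑ X : Matrix (Fin m) (Fin r) F, ∑ Y : Matrix (Fin r) (Fin n) F,
        (if (X * Y) i j ∈ A then (1:ℝ) else 0)
      = ∑ X : Fin m → Fin r → F, ∑ Y : Fin r → Fin n → F,
          (if (∑ k, X i k * Y k j) ∈ A then (1:ℝ) else 0) := by
        refine Fintype.sum_equiv (Equiv.refl _) _ _ fun X => ?_
        refine Fintype.sum_equiv (Equiv.refl _) _ _ fun Y => ?_
        rw [Matrix.mul_apply]
        rfl
    _ = ∑ X : Fin m → Fin r → F, (Fintype.card (Fin r → F) : ℝ) ^ (n - 1) *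
          ∑ v : Fin r → F, (if (∑ k, X i k * v k) ∈ A then (1:ℝ) else 0) := by
        refine Finset.sum_congr rfl fun X _ => ?_
        have h2 := sum_eval2 j (fun v : Fin r → F => if (∑ k, X i k * v k) ∈ A then (1:ℝ) else 0)
        rw [Fintype.card_fin] at h2
        exact h2
    _ = (Fintype.card (Fin r → F) : ℝ) ^ (n - 1) *
          ∑ X : Fin m → Fin r → F,
            (fun u : Fin r → F => ∑ v : Fin r → F,
              (if (∑ k, u k * v k) ∈ A then (1:ℝ) else 0)) (X i) := by
        rw [← Finset.mul_sum]
    _ = (Fintype.card (Fin r → F) : ℝ) ^ (n - 1) * ((Fintype.card (Fin r → F) : ℝ) ^ (m - 1) *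
          ∑ u : Fin r → F, ∑ v : Fin r → F, (if (∑ k, u k * v k) ∈ A then (1:ℝ) else 0)) := by
        rw [sum_eval i (fun u : Fin r → F => ∑ v : Fin r → F,
          (if (∑ k, u k * v k) ∈ A then (1:ℝ) else 0)), Fintype.card_fin]
    _ = _ := by
        rw [hcount]
        simp only [Fintype.card_fun, Fintype.card_fin]
        push_cast
        ring

end Aux

/-- Lemma 3.1(1): the expectation of `ct_A(XY)` for independent uniform `X ∈ F^{m×r}`,
`Y ∈ F^{r×n}` equals `μ_A(q,m,n,r)`. -/
theorem expectation_ctA_prod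
    {F : Type*} [Field F] [Fintype F] (A : Finset F) (m n r : ℕ)
    (hm : 0 < m) (hn : 0 < n) (hr : 0 < r) :
    (∑ P : Matrix (Fin m) (Fin r) F × Matrix (Fin r) (Fin n) F,
        (ctA A (P.1 * P.2) : ℝ)) /
      (Fintype.card (Matrix (Fin m) (Fin r) F × Matrix (Fin r) (Fin n) F) : ℝ) =
    muA A m n r := by
  have hq0 : (0:ℝ) < (Fintype.card F : ℝ) := by exact_mod_cast Fintype.card_pos
  have hct : ∀ P : Matrix (Fin m) (Fin r) F × Matrix (Fin r) (Fin n) F,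
      (ctA A (P.1 * P.2) : ℝ)
        = ∑ p : Fin m × Fin n, (if (P.1 * P.2) p.1 p.2 ∈ A then (1:ℝ) else 0) := by
    intro P
    rw [ctA, Finset.card_filter]
    push_cast
    rfl
  simp_rw [hct]
  rw [Finset.sum_comm]
  have hpair : ∀ p : Fin m × Fin n,
      (∑ P : Matrix (Fin m) (Fin r) F × Matrix (Fin r) (Fin n) F,
        (if (P.1 * P.2) p.1 p.2 ∈ A then (1:ℝ) else 0))
      = ((Fintype.card F : ℝ) ^ r) ^ (m - 1) * ((Fintype.card F : ℝ) ^ r) ^ (n - 1) *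
        ((if (0:F) ∈ A then ((Fintype.card F : ℝ)) ^ r else 0)
          + ((Fintype.card F : ℝ) ^ r - 1) * (Fintype.card F : ℝ) ^ (r - 1) * A.card) :=
    fun p => sum_pair A p.1 p.2
  rw [Finset.sum_congr rfl fun p _ => hpair p, Finset.sum_const, Finset.card_univ,
    Fintype.card_prod, Fintype.card_fin, Fintype.card_fin, nsmul_eq_mul]
  have hcard : (Fintype.card (Matrix (Fin m) (Fin r) F × Matrix (Fin r) (Fin n) F) : ℝ)
      = ((Fintype.card F : ℝ) ^ r) ^ m * ((Fintype.card F : ℝ) ^ r) ^ n := by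
    have h1 : Fintype.card (Matrix (Fin m) (Fin r) F) = Fintype.card (Fin m → Fin r → F) :=
      Fintype.card_congr (Equiv.refl _)
    have h2 : Fintype.card (Matrix (Fin r) (Fin n) F) = Fintype.card (Fin r → Fin n → F) :=
      Fintype.card_congr (Equiv.refl _)
    rw [Fintype.card_prod, h1, h2]
    simp only [Fintype.card_fun, Fintype.card_fin]
    push_cast
    ring
  rw [hcard, muA, gammaA]
  obtain ⟨m, rfl⟩ : ∃ k, m = k + 1 := ⟨m - 1, (Nat.succ_pred_eq_of_pos hm).symm⟩
  obtain ⟨n, rfl⟩ : ∃ k, n = k + 1 := ⟨n - 1, (Nat.succ_pred_eq_of_pos hn).symm⟩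
  obtain ⟨r, rfl⟩ : ∃ k, r = k + 1 := ⟨r - 1, (Nat.succ_pred_eq_of_pos hr).symm⟩
  simp only [Nat.add_sub_cancel]
  have hqne : (Fintype.card F : ℝ) ≠ 0 := ne_of_gt hq0
  by_cases h0 : (0:F) ∈ A <;>
    simp only [h0, if_true, if_false] <;>
    · simp only [inv_pow]
      field_simp
      push_cast
      ring


end
end
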